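/- Let G be a group, U a normal subgroup of G, K a normal subgroup of G contained in U with U/K abelian. Then U/K has a complement in G/K if and only if there is a group homomorphism φ : G → G/K such that φ(y) ≡ yK modulo U/K for all y ∈ G and U ⊆ ker φ. -/

import Mathlib

/-- Let `G` be a group with normal subgroups `K ≤ U` such that `U/K` is abelian.
Then `U/K` has a complement in `G/K` if and only if there is a homomorphism
`φ : G → G/K` with `φ(y) ≡ yK mod U/K` for all `y ∈ G` and `U ⊆ ker φ`. -/
theorem complement_iff_retraction {G : Type*} [Group G] (U K : Subgroup G)
    (hU : U.Normal) (hK : K.Normal) (hKU : K ≤ U)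
    (hab : ∀ a b : G, a ∈ U → b ∈ U → a * b * a⁻¹ * b⁻¹ ∈ K) :
    (∃ Θ : Subgroup (G ⧸ K),
        Θ ⊓ U.map (QuotientGroup.mk' K) = ⊥ ∧
        Θ ⊔ U.map (QuotientGroup.mk' K) = ⊤) ↔
      ∃ φ : G →* G ⧸ K,
        (∀ y : G, φ y * (QuotientGroup.mk' K y)⁻¹ ∈ U.map (QuotientGroup.mk' K)) ∧
        ∀ u ∈ U, φ u = 1 := by
  set Ub := U.map (QuotientGroup.mk' K) with hUb
  haveI hUbn : Ub.Normal := hU.map _ (QuotientGroup.mk'_surjective K)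
  constructor
  · rintro ⟨Θ, hint, hsup⟩
    set π := QuotientGroup.mk' Ub with hπ
    have hker : π.ker = Ub := QuotientGroup.ker_mk' Ub
    have hbij : Function.Bijective (π.comp Θ.subtype) := by
      constructor
      · rw [← MonoidHom.ker_eq_bot_iff, eq_bot_iff]
        intro x hx
        have hxU : (x : G ⧸ K) ∈ Ub := by
          have := hx
          rw [MonoidHom.mem_ker, MonoidHom.comp_apply] at this
          have : (x : G ⧸ K) ∈ π.ker := this
          rwa [hker] at this
        have : (x : G ⧸ K) ∈ Θ ⊓ Ub := ⟨x.2, hxU⟩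
        rw [hint, Subgroup.mem_bot] at this
        simpa [Subgroup.mem_bot] using Subtype.ext this
      · intro a
        obtain ⟨g, rfl⟩ := QuotientGroup.mk'_surjective Ub a
        have hg : g ∈ (↑(Θ ⊔ Ub) : Set (G ⧸ K)) := by
          rw [hsup]; trivial
        rw [Subgroup.mul_normal] at hg
        obtain ⟨t, ht, u, hu, rfl⟩ := hg
        refine ⟨⟨t, ht⟩, ?_⟩
        have : π u = 1 := by rw [← MonoidHom.mem_ker, hker]; exact hu
        simp only [MonoidHom.comp_apply, Subgroup.subtype_apply, ← hπ, map_mul, this, mul_one]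
    set e := MulEquiv.ofBijective (π.comp Θ.subtype) hbij with he
    refine ⟨(Θ.subtype.comp e.symm.toMonoidHom).comp (π.comp (QuotientGroup.mk' K)),
      ?_, ?_⟩
    · intro y
      have hπφ : π ((Θ.subtype.comp e.symm.toMonoidHom)
          (π (QuotientGroup.mk' K y))) = π (QuotientGroup.mk' K y) := by
        have := e.apply_symm_apply (π (QuotientGroup.mk' K y))
        exact this
      have : ((Θ.subtype.comp e.symm.toMonoidHom) (π (QuotientGroup.mk' K y)))
          * (QuotientGroup.mk' K y)⁻¹ ∈ π.ker := by
        rw [MonoidHom.mem_ker, map_mul, map_inv, hπφ, mul_inv_cancel]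
      rw [hker] at this
      simpa [MonoidHom.comp_apply] using this
    · intro u hu
      have h1 : π (QuotientGroup.mk' K u) = 1 := by
        rw [← MonoidHom.mem_ker, hker]
        exact ⟨u, hu, rfl⟩
      simp [MonoidHom.comp_apply, h1]
      simpa using h1
  · rintro ⟨φ, hmod, hkerU⟩
    refine ⟨φ.range, ?_, ?_⟩
    · rw [eq_bot_iff]
      rintro x ⟨⟨y, rfl⟩, hxU⟩
      have hyU : QuotientGroup.mk' K y ∈ Ub := by
        have h := hmod y
        have : QuotientGroup.mk' K y = (φ y * (QuotientGroup.mk' K y)⁻¹)⁻¹ * φ y := by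
          group
        rw [this]
        exact mul_mem (inv_mem h) hxU
      obtain ⟨u, hu, huy⟩ := hyU
      have : y⁻¹ * u ∈ K := by
        have := QuotientGroup.mk'_eq_mk' (N := K) |>.mp huy
        obtain ⟨z, hz, hzy⟩ := this
        have : y = u * z := hzy.symm
        rw [this]; group; simpa using hz
      have hyU' : y ∈ U := by
        have : y⁻¹ * u ∈ U := hKU this
        have hy : y⁻¹ ∈ U := by
          have := mul_mem this (inv_mem hu)
          simpa using this
        simpa using inv_mem hy
      simp [Subgroup.mem_bot, hkerU y hyU']
    · rw [eq_top_iff]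
      rintro x -
      obtain ⟨y, rfl⟩ := QuotientGroup.mk'_surjective K x
      have h := hmod y
      have hx : QuotientGroup.mk' K y = (φ y * (QuotientGroup.mk' K y)⁻¹)⁻¹ * φ y := by
        group
      rw [hx]
      exact mul_mem (Subgroup.mem_sup_right (inv_mem h)) (Subgroup.mem_sup_left ⟨y, rfl⟩)
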